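/- For real parameters θ¹, θ² with θ¹+θ² > 0 and θ¹−θ² > 0, the integral ∫_{ℝ} sech(x)^{θ¹} · e^{θ² x} dx converges and equals 2^{θ¹−1} · Γ((θ¹−θ²)/2) · Γ((θ¹+θ²)/2) / Γ(θ¹). In particular, the beta-logistic density p(x;θ¹,θ²) = 2^{1−θ¹} sech(x)^{θ¹} e^{θ² x} / B((θ¹−θ²)/2, (θ¹+θ²)/2) integrates to 1 over ℝ. -/

import Mathlib

open MeasureTheory

/-- The hyperbolic secant function: `sech x = 2 / (eˣ + e⁻ˣ)`. -/
noncomputable def sech (x : ℝ) : ℝ := 1 / Real.cosh x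

/-- The beta-logistic density `p(x; θ¹, θ²) = 2^{1-θ¹} sech(x)^{θ¹} e^{θ² x} / B((θ¹-θ²)/2, (θ¹+θ²)/2)`,
where `B(a,b) = Γ(a)Γ(b)/Γ(a+b)`. -/
noncomputable def betaLogisticPDF (θ1 θ2 x : ℝ) : ℝ :=
  (2 : ℝ) ^ (1 - θ1) * sech x ^ θ1 * Real.exp (θ2 * x) /
    (Real.Gamma ((θ1 - θ2) / 2) * Real.Gamma ((θ1 + θ2) / 2) / Real.Gamma θ1)

section Aux
open Set Real Filter

lemma realBeta_aux (a b : ℝ) (ha : 0 < a) (hb : 0 < b) :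
    IntegrableOn (fun x : ℝ => x ^ (a-1) * (1-x) ^ (b-1)) (Ioo 0 1) ∧
    ∫ x in Ioo (0:ℝ) 1, x ^ (a-1) * (1-x) ^ (b-1)
      = Real.Gamma a * Real.Gamma b / Real.Gamma (a+b) := by
  set c : ℝ → ℂ := fun x => (x:ℂ) ^ ((a:ℂ)-1) * (1-(x:ℂ)) ^ ((b:ℂ)-1) with hc
  have hconv : IntervalIntegrable c volume 0 1 :=
    Complex.betaIntegral_convergent (by simpa using ha) (by simpa using hb)
  have hIoo : IntegrableOn c (Ioo 0 1) := hconv.1.mono_set Ioo_subset_Ioc_self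
  have key : ∀ x ∈ Ioo (0:ℝ) 1, c x = ((x ^ (a-1) * (1-x) ^ (b-1) : ℝ) : ℂ) := by
    intro x hx
    rw [hc]
    push_cast [Complex.ofReal_cpow hx.1.le, Complex.ofReal_cpow
      (by linarith [hx.2] : (0:ℝ) ≤ 1 - x)]
    norm_num
  constructor
  · have := hIoo.re
    refine (integrable_congr ?_).mp this
    filter_upwards [ae_restrict_mem measurableSet_Ioo] with x hx
    rw [key x hx]
    simp
  · have h4 : ∫ x in Ioo (0:ℝ) 1, (x ^ (a-1) * (1-x) ^ (b-1) : ℝ)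
        = (∫ x in Ioo (0:ℝ) 1, c x).re := by
      rw [← RCLike.re_to_complex, ← integral_re hIoo]
      refine setIntegral_congr_fun measurableSet_Ioo fun x hx => ?_
      rw [key x hx]
      simp
    have h5 : (∫ x in Ioo (0:ℝ) 1, c x) = Complex.betaIntegral a b := by
      rw [Complex.betaIntegral, intervalIntegral.integral_of_le zero_le_one,
        ← integral_Ioc_eq_integral_Ioo]
    have hbeta := Complex.Gamma_mul_Gamma_eq_betaIntegral (s := (a:ℂ)) (t := (b:ℂ))
      (by simpa using ha) (by simpa using hb)
    have h6 : Complex.betaIntegral a b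
        = (Complex.Gamma a * Complex.Gamma b) / Complex.Gamma (a + b) := by
      have hne : Complex.Gamma ((a:ℂ) + b) ≠ 0 :=
        Complex.Gamma_ne_zero_of_re_pos (by simpa using add_pos ha hb)
      field_simp
      rw [hbeta]; ring
    rw [h4, h5, h6]
    simp only [← Complex.ofReal_add, Complex.Gamma_ofReal, ← Complex.ofReal_mul,
      ← Complex.ofReal_div, Complex.ofReal_re]

lemma img_aux : (fun t : ℝ => t / (1 + t)) '' (Ioi 0) = Ioo 0 1 := by
  ext y
  constructor
  · rintro ⟨t, ht, rfl⟩
    have ht0 : (0:ℝ) < t := ht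
    have ht' : (0:ℝ) < 1 + t := by linarith
    exact ⟨div_pos ht0 ht', (div_lt_one ht').2 (by linarith)⟩
  · rintro ⟨hy0, hy1⟩
    refine ⟨y / (1 - y), div_pos hy0 (by linarith), ?_⟩
    have h1 : (1:ℝ) - y ≠ 0 := by linarith
    field_simp
    ring

lemma deriv_aux (t : ℝ) (ht : t ∈ Ioi (0:ℝ)) :
    HasDerivWithinAt (fun t : ℝ => t / (1 + t)) (((1+t)^2)⁻¹) (Ioi 0) t := by
  have ht0 : (0:ℝ) < t := ht
  have ht' : (1:ℝ) + t ≠ 0 := by positivity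
  have h : HasDerivAt (fun t : ℝ => t / (1 + t))
      ((1 * (1 + t) - t * (0 + 1)) / (1 + t) ^ 2) t :=
    (hasDerivAt_id t).div ((hasDerivAt_const t 1).add (hasDerivAt_id t)) ht'
  rw [show ((1+t)^2)⁻¹ = ((1 * (1 + t) - t * (0 + 1)) / (1 + t) ^ 2 : ℝ) by ring]
  exact h.hasDerivWithinAt

lemma inj_aux : Set.InjOn (fun t : ℝ => t / (1 + t)) (Ioi 0) := by
  intro x hx y hy h
  simp only [mem_Ioi] at hx hy
  have hx' : (1:ℝ) + x ≠ 0 := by positivity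
  have hy' : (1:ℝ) + y ≠ 0 := by positivity
  field_simp at h
  linarith

lemma betaIoi_aux (a b : ℝ) (ha : 0 < a) (hb : 0 < b) :
    IntegrableOn (fun t : ℝ => t ^ (a-1) * (1+t) ^ (-(a+b))) (Ioi 0) ∧
    ∫ t in Ioi (0:ℝ), t ^ (a-1) * (1+t) ^ (-(a+b))
      = Real.Gamma a * Real.Gamma b / Real.Gamma (a+b) := by
  obtain ⟨hInt, hVal⟩ := realBeta_aux a b ha hb
  set g : ℝ → ℝ := fun x => x ^ (a-1) * (1-x) ^ (b-1) with hg
  have hpt : ∀ t ∈ Ioi (0:ℝ),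
      |((1+t)^2)⁻¹| • g (t / (1+t)) = t ^ (a-1) * (1+t) ^ (-(a+b)) := by
    intro t ht
    have ht0 : (0:ℝ) < t := ht
    have hu : (0:ℝ) < 1 + t := by linarith
    have e1 : 1 - t/(1+t) = (1+t)⁻¹ := by field_simp; ring
    have e2 : (t/(1+t)) ^ (a-1) = t ^ (a-1) * ((1+t) ^ (a-1))⁻¹ := by
      rw [div_rpow ht0.le hu.le, div_eq_mul_inv]
    have e3 : ((1+t)⁻¹) ^ (b-1) = ((1+t) ^ (b-1))⁻¹ := inv_rpow hu.le _
    have e4 : ((1+t):ℝ) ^ (a+b) = (1+t) ^ (a-1) * ((1+t) ^ (b-1) * (1+t) ^ (2:ℕ)) := by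
      rw [← rpow_natCast (1+t) 2, ← rpow_add hu, ← rpow_add hu]
      congr 1
      push_cast
      ring
    have e5 : ((1+t):ℝ) ^ (-(a+b)) = (((1+t):ℝ) ^ (a+b))⁻¹ := rpow_neg hu.le _
    have p1 : (0:ℝ) < (1+t) ^ (a-1) := rpow_pos_of_pos hu _
    have p2 : (0:ℝ) < (1+t) ^ (b-1) := rpow_pos_of_pos hu _
    rw [smul_eq_mul]
    show |((1+t)^2)⁻¹| * ((t/(1+t)) ^ (a-1) * (1 - t/(1+t)) ^ (b-1)) = _
    rw [e1, e2, e3, e5, e4, abs_of_pos (by positivity), mul_inv, mul_inv]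
    ring
  have himg := img_aux
  constructor
  · have := (integrableOn_image_iff_integrableOn_abs_deriv_smul measurableSet_Ioi
      deriv_aux inj_aux g).mp (by rwa [himg])
    refine (integrable_congr ?_).mp this
    filter_upwards [ae_restrict_mem measurableSet_Ioi] with t ht
    exact hpt t ht
  · have := integral_image_eq_integral_abs_deriv_smul measurableSet_Ioi
      deriv_aux inj_aux g
    rw [himg, hVal] at this
    rw [this]
    exact setIntegral_congr_fun measurableSet_Ioi fun t ht => (hpt t ht).symm

lemma exp_img : (fun x : ℝ => Real.exp (2*x)) '' univ = Ioi 0 := by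
  rw [image_univ]
  ext t
  constructor
  · rintro ⟨x, rfl⟩; exact Real.exp_pos _
  · intro ht
    refine ⟨Real.log t / 2, ?_⟩
    show Real.exp (2 * (Real.log t / 2)) = t
    rw [mul_div_cancel₀ _ (two_ne_zero), Real.exp_log ht]

lemma exp_deriv (x : ℝ) (_ : x ∈ (univ : Set ℝ)) :
    HasDerivWithinAt (fun x : ℝ => Real.exp (2*x)) (2 * Real.exp (2*x)) univ x := by
  have h := ((hasDerivAt_id x).const_mul (2:ℝ)).exp
  simp only [id_eq, mul_one] at h
  exact (h.congr_deriv (mul_comm _ _)).hasDerivWithinAt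

lemma exp_inj : Set.InjOn (fun x : ℝ => Real.exp (2*x)) univ := by
  intro x _ y _ h
  have := Real.exp_injective h
  linarith

lemma expSub (G : ℝ → ℝ) (hInt : IntegrableOn G (Ioi 0)) :
    Integrable (fun x : ℝ => 2 * Real.exp (2*x) * G (Real.exp (2*x))) ∧
    (∫ x : ℝ, 2 * Real.exp (2*x) * G (Real.exp (2*x))) = ∫ t in Ioi (0:ℝ), G t := by
  have hpt : ∀ x : ℝ, |2 * Real.exp (2*x)| • G (Real.exp (2*x))
      = 2 * Real.exp (2*x) * G (Real.exp (2*x)) := by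
    intro x
    rw [smul_eq_mul, abs_of_pos (by positivity)]
  constructor
  · have := (integrableOn_image_iff_integrableOn_abs_deriv_smul MeasurableSet.univ
      exp_deriv exp_inj G).mp (by rwa [exp_img])
    rw [integrableOn_univ] at this
    exact this.congr (Filter.Eventually.of_forall hpt)
  · have := integral_image_eq_integral_abs_deriv_smul MeasurableSet.univ
      exp_deriv exp_inj G
    rw [exp_img, setIntegral_univ] at this
    rw [this]
    exact integral_congr_ae (Filter.Eventually.of_forall fun x => (hpt x).symm)

lemma sech_swap (θ1 θ2 a : ℝ) (ha : a = (θ1 + θ2) / 2) (x : ℝ) :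
    sech x ^ θ1 * Real.exp (θ2 * x)
      = (2:ℝ) ^ (θ1 - 1) *
        (2 * Real.exp (2*x) *
          (Real.exp (2*x) ^ (a-1) * (1 + Real.exp (2*x)) ^ (-θ1))) := by
  have hE : (0:ℝ) < Real.exp x := Real.exp_pos x
  have hQ : (0:ℝ) < Real.exp (2*x) := Real.exp_pos _
  have h1Q : (0:ℝ) < 1 + Real.exp (2*x) := by positivity
  have hsech : sech x = 2 * Real.exp x / (1 + Real.exp (2*x)) := by
    rw [sech, Real.cosh_eq, Real.exp_neg]
    rw [show (2:ℝ)*x = x + x by ring, Real.exp_add]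
    rw [div_div_eq_mul_div, div_eq_div_iff (by positivity) (by positivity)]
    field_simp
    ring
  rw [hsech, div_rpow (by positivity) h1Q.le, mul_rpow (by norm_num) hE.le,
    Real.rpow_neg h1Q.le, ← Real.exp_mul, ← Real.exp_mul, div_eq_mul_inv]
  rw [show (2:ℝ) ^ (θ1 - 1) *
      (2 * Real.exp (2*x) * (Real.exp ((2*x) * (a-1)) * ((1 + Real.exp (2*x)) ^ θ1)⁻¹))
    = ((2:ℝ) ^ (θ1-1) * 2) * (Real.exp (2*x) * Real.exp ((2*x)*(a-1)))
        * ((1 + Real.exp (2*x)) ^ θ1)⁻¹ by ring]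
  rw [← Real.exp_add, ← Real.rpow_add_one (by norm_num : (2:ℝ) ≠ 0), sub_add_cancel]
  rw [show (2:ℝ) ^ θ1 * Real.exp (x * θ1) * ((1 + Real.exp (2*x)) ^ θ1)⁻¹ * Real.exp (θ2 * x)
    = (2:ℝ) ^ θ1 * (Real.exp (x * θ1) * Real.exp (θ2 * x)) * ((1 + Real.exp (2*x)) ^ θ1)⁻¹
      by ring, ← Real.exp_add]
  congr 2
  rw [ha]; ring

end Aux

/-- For `θ¹ + θ² > 0` and `θ¹ - θ² > 0`, the integral `∫ sech(x)^{θ¹} e^{θ² x} dx` converges and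
equals `2^{θ¹-1} Γ((θ¹-θ²)/2) Γ((θ¹+θ²)/2) / Γ(θ¹)`; consequently the beta-logistic density
integrates to 1. -/
theorem betaLogistic_normalization (θ1 θ2 : ℝ) (h1 : 0 < θ1 + θ2) (h2 : 0 < θ1 - θ2) :
    Integrable (fun x : ℝ => sech x ^ θ1 * Real.exp (θ2 * x)) ∧
    (∫ x : ℝ, sech x ^ θ1 * Real.exp (θ2 * x)) =
      (2 : ℝ) ^ (θ1 - 1) * Real.Gamma ((θ1 - θ2) / 2) * Real.Gamma ((θ1 + θ2) / 2) /
        Real.Gamma θ1 ∧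
    (∫ x : ℝ, betaLogisticPDF θ1 θ2 x) = 1 := by
  set a := (θ1 + θ2) / 2 with ha_def
  set b := (θ1 - θ2) / 2 with hb_def
  have ha : 0 < a := by rw [ha_def]; linarith
  have hb : 0 < b := by rw [hb_def]; linarith
  have hab : a + b = θ1 := by rw [ha_def, hb_def]; ring
  have hθ1 : 0 < θ1 := by rw [← hab]; positivity
  obtain ⟨hGInt, hGVal⟩ := betaIoi_aux a b ha hb
  rw [hab] at hGInt hGVal
  obtain ⟨hSInt, hSVal⟩ := expSub _ hGInt
  have hswap := sech_swap θ1 θ2 a ha_def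
  have hInt : Integrable (fun x : ℝ => sech x ^ θ1 * Real.exp (θ2 * x)) := by
    have := hSInt.const_mul ((2:ℝ) ^ (θ1 - 1))
    exact this.congr (Filter.Eventually.of_forall fun x => (hswap x).symm)
  have hVal : (∫ x : ℝ, sech x ^ θ1 * Real.exp (θ2 * x)) =
      (2 : ℝ) ^ (θ1 - 1) * Real.Gamma b * Real.Gamma a / Real.Gamma θ1 := by
    rw [integral_congr_ae (Filter.Eventually.of_forall hswap), integral_const_mul,
      hSVal, hGVal]
    ring
  have hΓa : 0 < Real.Gamma a := Real.Gamma_pos_of_pos ha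
  have hΓb : 0 < Real.Gamma b := Real.Gamma_pos_of_pos hb
  have hΓt : 0 < Real.Gamma θ1 := Real.Gamma_pos_of_pos hθ1
  refine ⟨hInt, by rw [hVal], ?_⟩
  have hpdf : ∀ x : ℝ, betaLogisticPDF θ1 θ2 x
      = ((2:ℝ) ^ (1 - θ1) / (Real.Gamma b * Real.Gamma a / Real.Gamma θ1)) *
        (sech x ^ θ1 * Real.exp (θ2 * x)) := by
    intro x
    rw [betaLogisticPDF]
    ring
  rw [integral_congr_ae (Filter.Eventually.of_forall hpdf), integral_const_mul, hVal]
  have h2 : (2:ℝ) ^ (1 - θ1) * 2 ^ (θ1 - 1) = 1 := by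
    rw [← Real.rpow_add two_pos]
    norm_num
  field_simp
  linear_combination h2
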